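/- Let F be a field of characteristic 2, and b, c ∈ F[x] with deg c odd and deg c > 2 deg b. Define Deg(u + Δv) = max(deg u, deg v + (deg c)/2) ∈ ℚ ∪ {-∞} on R = F[x][t]/(t² + bt + c). Then Deg is multiplicative with respect to addition: Deg(αβ) = Deg(α) + Deg(β) for all α, β ∈ R. -/

import Mathlib

open Polynomial

/-- The half-integer valued degree Deg(u + Δv) = max(deg u, deg v + deg c / 2)
on R = F[x][t]/(t² + bt + c). -/
noncomputable def halfDeg {F : Type} [Field F] (c u v : Polynomial F) :
    WithBot ℚ :=
  max ((u.degree).map (Nat.cast : ℕ → ℚ))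
    ((v.degree).map (Nat.cast : ℕ → ℚ) + ((c.natDegree : ℚ) / 2 : ℚ))

namespace HalfDegAux

variable {F : Type} [Field F]

/-- The degree, mapped into `WithBot ℚ`. -/
noncomputable def q (p : Polynomial F) : WithBot ℚ := (p.degree).map (Nat.cast : ℕ → ℚ)

/-- Half the degree of `c`, as an element of `WithBot ℚ`. -/
noncomputable def gam (c : Polynomial F) : WithBot ℚ := (((c.natDegree : ℚ) / 2 : ℚ) : WithBot ℚ)

lemma halfDeg_eq (c u v : Polynomial F) : halfDeg c u v = max (q u) (q v + gam c) := rfl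

lemma gam_ne_bot (c : Polynomial F) : gam c ≠ ⊥ := WithBot.coe_ne_bot

lemma q_zero : q (0 : Polynomial F) = ⊥ := by simp [q]

lemma q_coe {p : Polynomial F} (hp : p ≠ 0) : q p = ((p.natDegree : ℚ) : WithBot ℚ) := by
  rw [q, degree_eq_natDegree hp, Nat.cast_withBot, WithBot.map_coe]

lemma q_ne_bot {p : Polynomial F} (hp : p ≠ 0) : q p ≠ ⊥ := by
  simp [q_coe hp]

lemma cast_strictMono : StrictMono (WithBot.map (Nat.cast : ℕ → ℚ)) :=
  Nat.strictMono_cast.withBot_map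

lemma q_lt_q_iff {p r : Polynomial F} : q p < q r ↔ p.degree < r.degree :=
  cast_strictMono.lt_iff_lt

lemma q_le_q_iff {p r : Polynomial F} : q p ≤ q r ↔ p.degree ≤ r.degree :=
  cast_strictMono.le_iff_le

lemma q_congr {p r : Polynomial F} (h : p.degree = r.degree) : q p = q r := by
  unfold q; rw [h]

lemma mapc_add (a b : WithBot ℕ) :
    (a + b).map (Nat.cast : ℕ → ℚ) = a.map Nat.cast + b.map Nat.cast := by
  cases a <;> cases b <;> simp [← WithBot.coe_add]

lemma q_mul (p r : Polynomial F) : q (p * r) = q p + q r := by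
  rw [q, degree_mul, mapc_add]; rfl

lemma q_add_le (p r : Polynomial F) : q (p + r) ≤ max (q p) (q r) := by
  rcases le_max_iff.mp (degree_add_le p r) with h | h
  · exact le_max_of_le_left (q_le_q_iff.mpr h)
  · exact le_max_of_le_right (q_le_q_iff.mpr h)

lemma q_sub_le (p r : Polynomial F) : q (p - r) ≤ max (q p) (q r) := by
  rcases le_max_iff.mp (degree_sub_le p r) with h | h
  · exact le_max_of_le_left (q_le_q_iff.mpr h)
  · exact le_max_of_le_right (q_le_q_iff.mpr h)

lemma helper {a b c g T : WithBot ℚ} (h : a ≤ max b c) (hb : b + g < T) (hc : c + g < T) :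
    a + g < T := by
  rcases le_total b c with hbc | hbc
  · rw [max_eq_right hbc] at h
    exact lt_of_le_of_lt (add_le_add_left h g) hc
  · rw [max_eq_left hbc] at h
    exact lt_of_le_of_lt (add_le_add_left h g) hb

section Main

variable {b c : Polynomial F}

lemma c_ne_zero (hodd : Odd c.natDegree) : c ≠ 0 := by
  intro h
  rw [h, natDegree_zero] at hodd
  exact (Nat.not_odd_iff_even.mpr Even.zero) hodd

lemma q_c (hodd : Odd c.natDegree) : q c = gam c + gam c := by
  rw [q_coe (c_ne_zero hodd), gam, ← WithBot.coe_add]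
  norm_num

lemma q_b_lt (hdeg : 2 * b.natDegree < c.natDegree) : q b < gam c := by
  rcases eq_or_ne b 0 with rfl | hb
  · rw [q_zero, gam]; exact WithBot.bot_lt_coe _
  · rw [q_coe hb, gam, WithBot.coe_lt_coe]
    rw [lt_div_iff₀ (by norm_num : (0:ℚ) < 2)]
    have : (b.natDegree : ℚ) * 2 = ((2 * b.natDegree : ℕ) : ℚ) := by push_cast; ring
    rw [this]
    exact_mod_cast hdeg

lemma tri (hodd : Odd c.natDegree) (u v : Polynomial F) :
    q v + gam c < q u ∨ q u < q v + gam c ∨ (u = 0 ∧ v = 0) := by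
  rcases eq_or_ne u 0 with rfl | hu
  · rcases eq_or_ne v 0 with rfl | hv
    · exact Or.inr (Or.inr ⟨rfl, rfl⟩)
    · refine Or.inr (Or.inl ?_)
      rw [q_zero, q_coe hv, gam, ← WithBot.coe_add]
      exact WithBot.bot_lt_coe _
  · rcases eq_or_ne v 0 with rfl | hv
    · refine Or.inl ?_
      rw [q_zero, q_coe hu, WithBot.bot_add]
      exact WithBot.bot_lt_coe _
    · rw [q_coe hu, q_coe hv, gam, ← WithBot.coe_add]
      have hne : (u.natDegree : ℚ) ≠ (v.natDegree : ℚ) + (c.natDegree : ℚ) / 2 := by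
        intro h
        have h2 : (2 * u.natDegree : ℚ) = 2 * v.natDegree + c.natDegree := by
          field_simp at h; linarith
        have h3 : 2 * u.natDegree = 2 * v.natDegree + c.natDegree := by exact_mod_cast h2
        obtain ⟨k, hk⟩ := hodd
        omega
      rcases lt_or_gt_of_ne hne with h | h
      · exact Or.inr (Or.inl (WithBot.coe_lt_coe.mpr h))
      · exact Or.inl (WithBot.coe_lt_coe.mpr h)

lemma caseA (hodd : Odd c.natDegree) (hdeg : 2 * b.natDegree < c.natDegree)
    (u₁ v₁ u₂ v₂ : Polynomial F)
    (h1 : q v₁ + gam c < q u₁) (h2 : q v₂ + gam c < q u₂) :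
    max (q (u₁ * u₂ - c * (v₁ * v₂))) (q (u₁ * v₂ + v₁ * u₂ - b * (v₁ * v₂)) + gam c)
      = q u₁ + q u₂ := by
  have ha₁ : q u₁ ≠ ⊥ := fun hh => absurd (hh ▸ h1) (by simp)
  have ha₂ : q u₂ ≠ ⊥ := fun hh => absurd (hh ▸ h2) (by simp)
  have hcv : q (c * (v₁ * v₂)) < q u₁ + q u₂ := by
    simp only [q_mul, q_c hodd]
    calc gam c + gam c + (q v₁ + q v₂) = (q v₁ + gam c) + (q v₂ + gam c) := by abel
    _ ≤ (q v₁ + gam c) + q u₂ := add_le_add_right h2.le _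
    _ < q u₁ + q u₂ := WithBot.add_lt_add_of_lt_of_le ha₂ h1 le_rfl
  have hUeq : q (u₁ * u₂ - c * (v₁ * v₂)) = q u₁ + q u₂ := by
    rw [q_congr (degree_sub_eq_left_of_degree_lt (q_lt_q_iff.mp (by rw [q_mul u₁ u₂]; exact hcv))),
      q_mul]
  have hT1 : q (u₁ * v₂) + gam c < q u₁ + q u₂ := by
    rw [q_mul]
    calc q u₁ + q v₂ + gam c = q u₁ + (q v₂ + gam c) := by abel
    _ < q u₁ + q u₂ := WithBot.add_lt_add_of_le_of_lt ha₁ le_rfl h2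
  have hT2 : q (v₁ * u₂) + gam c < q u₁ + q u₂ := by
    rw [q_mul]
    calc q v₁ + q u₂ + gam c = (q v₁ + gam c) + q u₂ := by abel
    _ < q u₁ + q u₂ := WithBot.add_lt_add_of_lt_of_le ha₂ h1 le_rfl
  have hT3 : q (b * (v₁ * v₂)) + gam c < q u₁ + q u₂ := by
    refine lt_of_le_of_lt ?_ hcv
    simp only [q_mul, q_c hodd]
    calc q b + (q v₁ + q v₂) + gam c = q b + ((q v₁ + q v₂) + gam c) := by abel
    _ ≤ gam c + ((q v₁ + q v₂) + gam c) := add_le_add_left (q_b_lt hdeg).le _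
    _ = gam c + gam c + (q v₁ + q v₂) := by abel
  have hVlt : q (u₁ * v₂ + v₁ * u₂ - b * (v₁ * v₂)) + gam c < q u₁ + q u₂ :=
    helper (q_sub_le _ _) (helper (q_add_le _ _) hT1 hT2) hT3
  rw [hUeq]
  exact max_eq_left hVlt.le

lemma caseB (hodd : Odd c.natDegree) (hdeg : 2 * b.natDegree < c.natDegree)
    (u₁ v₁ u₂ v₂ : Polynomial F)
    (h1 : q u₁ < q v₁ + gam c) (h2 : q u₂ < q v₂ + gam c) :
    max (q (u₁ * u₂ - c * (v₁ * v₂))) (q (u₁ * v₂ + v₁ * u₂ - b * (v₁ * v₂)) + gam c)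
      = (q v₁ + gam c) + (q v₂ + gam c) := by
  have hB₁ : q v₁ + gam c ≠ ⊥ := fun hh => absurd (hh ▸ h1) (by simp)
  have hB₂ : q v₂ + gam c ≠ ⊥ := fun hh => absurd (hh ▸ h2) (by simp)
  have hv₁ : q v₁ ≠ ⊥ := (WithBot.add_ne_bot.mp hB₁).1
  have hv₂ : q v₂ ≠ ⊥ := (WithBot.add_ne_bot.mp hB₂).1
  have hcveq : q (c * (v₁ * v₂)) = (q v₁ + gam c) + (q v₂ + gam c) := by
    rw [q_mul, q_mul, q_c hodd]; abel
  have huu : q (u₁ * u₂) < q (c * (v₁ * v₂)) := by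
    rw [q_mul, hcveq]
    calc q u₁ + q u₂ ≤ (q v₁ + gam c) + q u₂ := add_le_add_left h1.le _
    _ < (q v₁ + gam c) + (q v₂ + gam c) := WithBot.add_lt_add_of_le_of_lt hB₁ le_rfl h2
  have hUeq : q (u₁ * u₂ - c * (v₁ * v₂)) = (q v₁ + gam c) + (q v₂ + gam c) := by
    rw [q_congr (degree_sub_eq_right_of_degree_lt (q_lt_q_iff.mp huu)), hcveq]
  have hT1 : q (u₁ * v₂) + gam c < (q v₁ + gam c) + (q v₂ + gam c) := by
    rw [q_mul]
    calc q u₁ + q v₂ + gam c = q u₁ + (q v₂ + gam c) := by abel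
    _ < (q v₁ + gam c) + (q v₂ + gam c) := WithBot.add_lt_add_of_lt_of_le hB₂ h1 le_rfl
  have hT2 : q (v₁ * u₂) + gam c < (q v₁ + gam c) + (q v₂ + gam c) := by
    rw [q_mul]
    calc q v₁ + q u₂ + gam c = (q v₁ + gam c) + q u₂ := by abel
    _ < (q v₁ + gam c) + (q v₂ + gam c) := WithBot.add_lt_add_of_le_of_lt hB₁ le_rfl h2
  have hT3 : q (b * (v₁ * v₂)) + gam c < (q v₁ + gam c) + (q v₂ + gam c) := by
    rw [q_mul, q_mul]
    have hne : (q v₁ + q v₂) + gam c ≠ ⊥ :=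
      WithBot.add_ne_bot.mpr ⟨WithBot.add_ne_bot.mpr ⟨hv₁, hv₂⟩, gam_ne_bot c⟩
    calc q b + (q v₁ + q v₂) + gam c = q b + ((q v₁ + q v₂) + gam c) := by abel
    _ < gam c + ((q v₁ + q v₂) + gam c) :=
        WithBot.add_lt_add_of_lt_of_le hne (q_b_lt hdeg) le_rfl
    _ = (q v₁ + gam c) + (q v₂ + gam c) := by abel
  have hVlt : q (u₁ * v₂ + v₁ * u₂ - b * (v₁ * v₂)) + gam c
      < (q v₁ + gam c) + (q v₂ + gam c) :=
    helper (q_sub_le _ _) (helper (q_add_le _ _) hT1 hT2) hT3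
  rw [hUeq]
  exact max_eq_left hVlt.le

lemma caseC (hodd : Odd c.natDegree) (hdeg : 2 * b.natDegree < c.natDegree)
    (u₁ v₁ u₂ v₂ : Polynomial F)
    (h1 : q v₁ + gam c < q u₁) (h2 : q u₂ < q v₂ + gam c) :
    max (q (u₁ * u₂ - c * (v₁ * v₂))) (q (u₁ * v₂ + v₁ * u₂ - b * (v₁ * v₂)) + gam c)
      = q u₁ + (q v₂ + gam c) := by
  have ha₁ : q u₁ ≠ ⊥ := fun hh => absurd (hh ▸ h1) (by simp)
  have hB₂ : q v₂ + gam c ≠ ⊥ := fun hh => absurd (hh ▸ h2) (by simp)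
  have hv₂ : q v₂ ≠ ⊥ := (WithBot.add_ne_bot.mp hB₂).1
  have hV1 : q (v₁ * u₂) < q (u₁ * v₂) := by
    rw [q_mul, q_mul]
    have s2 : (q v₁ + q u₂) + gam c < (q u₁ + q v₂) + gam c := by
      calc (q v₁ + q u₂) + gam c = (q v₁ + gam c) + q u₂ := by abel
      _ < q u₁ + (q v₂ + gam c) := lt_of_le_of_lt (add_le_add_right h2.le _) (WithBot.add_lt_add_of_lt_of_le hB₂ h1 le_rfl)
      _ = (q u₁ + q v₂) + gam c := by abel
    exact (WithBot.add_lt_add_iff_right (gam_ne_bot c)).mp s2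
  have hV2 : q (b * (v₁ * v₂)) < q (u₁ * v₂) := by
    rcases eq_or_ne v₁ 0 with rfl | hv₁
    · rw [zero_mul, mul_zero, q_zero, q_mul]
      exact Ne.bot_lt (WithBot.add_ne_bot.mpr ⟨ha₁, hv₂⟩)
    · rw [q_mul, q_mul, q_mul]
      calc q b + (q v₁ + q v₂) < gam c + (q v₁ + q v₂) :=
            WithBot.add_lt_add_of_lt_of_le (WithBot.add_ne_bot.mpr ⟨q_ne_bot hv₁, hv₂⟩)
              (q_b_lt hdeg) le_rfl
      _ = (q v₁ + gam c) + q v₂ := by abel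
      _ < q u₁ + q v₂ := WithBot.add_lt_add_of_lt_of_le hv₂ h1 le_rfl
  have hVeq : q (u₁ * v₂ + v₁ * u₂ - b * (v₁ * v₂)) = q u₁ + q v₂ := by
    have hrw : u₁ * v₂ + v₁ * u₂ - b * (v₁ * v₂) = u₁ * v₂ + (v₁ * u₂ - b * (v₁ * v₂)) := by
      ring
    rw [hrw]
    have hlt : (v₁ * u₂ - b * (v₁ * v₂)).degree < (u₁ * v₂).degree := by
      rw [← q_lt_q_iff]
      exact lt_of_le_of_lt (q_sub_le _ _) (max_lt hV1 hV2)
    rw [q_congr (degree_add_eq_left_of_degree_lt hlt), q_mul]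
  have hU1 : q (u₁ * u₂) < q u₁ + (q v₂ + gam c) := by
    rw [q_mul]
    exact WithBot.add_lt_add_of_le_of_lt ha₁ le_rfl h2
  have hU2 : q (c * (v₁ * v₂)) < q u₁ + (q v₂ + gam c) := by
    rw [q_mul, q_mul, q_c hodd]
    calc gam c + gam c + (q v₁ + q v₂) = (q v₁ + gam c) + (q v₂ + gam c) := by abel
    _ < q u₁ + (q v₂ + gam c) := WithBot.add_lt_add_of_lt_of_le hB₂ h1 le_rfl
  have hUlt : q (u₁ * u₂ - c * (v₁ * v₂)) < q u₁ + (q v₂ + gam c) :=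
    lt_of_le_of_lt (q_sub_le _ _) (max_lt hU1 hU2)
  have he : q (u₁ * v₂ + v₁ * u₂ - b * (v₁ * v₂)) + gam c = q u₁ + (q v₂ + gam c) := by
    rw [hVeq]; abel
  rw [he]
  exact max_eq_right hUlt.le

lemma core (hodd : Odd c.natDegree) (hdeg : 2 * b.natDegree < c.natDegree)
    (u₁ v₁ u₂ v₂ : Polynomial F) :
    halfDeg c (u₁ * u₂ - c * (v₁ * v₂)) (u₁ * v₂ + v₁ * u₂ - b * (v₁ * v₂))
      = halfDeg c u₁ v₁ + halfDeg c u₂ v₂ := by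
  rcases tri hodd u₁ v₁ with h1 | h1 | ⟨rfl, rfl⟩
  · rcases tri hodd u₂ v₂ with h2 | h2 | ⟨rfl, rfl⟩
    · rw [halfDeg_eq, halfDeg_eq, halfDeg_eq, max_eq_left h1.le, max_eq_left h2.le]
      exact caseA hodd hdeg u₁ v₁ u₂ v₂ h1 h2
    · rw [halfDeg_eq, halfDeg_eq, halfDeg_eq, max_eq_left h1.le, max_eq_right h2.le]
      exact caseC hodd hdeg u₁ v₁ u₂ v₂ h1 h2
    · simp [halfDeg]
  · rcases tri hodd u₂ v₂ with h2 | h2 | ⟨rfl, rfl⟩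
    · rw [halfDeg_eq, halfDeg_eq, halfDeg_eq, max_eq_right h1.le, max_eq_left h2.le]
      have hrw1 : u₁ * u₂ - c * (v₁ * v₂) = u₂ * u₁ - c * (v₂ * v₁) := by ring
      have hrw2 : u₁ * v₂ + v₁ * u₂ - b * (v₁ * v₂) = u₂ * v₁ + v₂ * u₁ - b * (v₂ * v₁) := by
        ring
      rw [hrw1, hrw2, caseC hodd hdeg u₂ v₂ u₁ v₁ h2 h1, add_comm]
    · rw [halfDeg_eq, halfDeg_eq, halfDeg_eq, max_eq_right h1.le, max_eq_right h2.le]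
      exact caseB hodd hdeg u₁ v₁ u₂ v₂ h1 h2
    · simp [halfDeg]
  · simp [halfDeg]

lemma repr_unique (b c : Polynomial F) (f : Polynomial (Polynomial F))
    (hf : f = X ^ 2 + C b * X + C c)
    (u₁ v₁ u₂ v₂ U V : Polynomial F)
    (h : (AdjoinRoot.of f u₁ + AdjoinRoot.root f * AdjoinRoot.of f v₁)
          * (AdjoinRoot.of f u₂ + AdjoinRoot.root f * AdjoinRoot.of f v₂)
        = AdjoinRoot.of f U + AdjoinRoot.root f * AdjoinRoot.of f V) :
    U = u₁ * u₂ - c * (v₁ * v₂) ∧ V = u₁ * v₂ + v₁ * u₂ - b * (v₁ * v₂) := by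
  have hdegf : f.degree = 2 := by
    rw [hf, add_assoc]
    rw [degree_add_eq_left_of_degree_lt, degree_X_pow]
    · norm_cast
    rw [degree_X_pow]
    refine lt_of_le_of_lt (degree_add_le _ _) (max_lt ?_ ?_)
    · exact lt_of_le_of_lt (degree_mul_le _ _) (by
        rw [degree_X]
        calc (C b).degree + 1 ≤ 0 + 1 := add_le_add_left degree_C_le 1
        _ < 2 := by decide)
    · exact lt_of_le_of_lt degree_C_le (by decide)
  have hof : ∀ p : Polynomial F, AdjoinRoot.of f p = AdjoinRoot.mk f (C p) := fun p => rfl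
  have hroot : AdjoinRoot.root f = AdjoinRoot.mk f X := rfl
  rw [hof, hof, hof, hof, hof, hof, hroot, ← map_mul, ← map_mul, ← map_mul, ← map_add,
    ← map_add, ← map_add] at h
  have hdvd := AdjoinRoot.mk_eq_mk.mp h
  set A := u₁ * u₂ - c * (v₁ * v₂) - U with hA
  set B := u₁ * v₂ + v₁ * u₂ - b * (v₁ * v₂) - V with hB
  have hg : (C u₁ + X * C v₁) * (C u₂ + X * C v₂) - (C U + X * C V)
      - C (v₁ * v₂) * f = C A + C B * X := by
    rw [hf, hA, hB]
    simp only [map_add, map_sub, map_mul]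
    ring
  have hdvd2 : f ∣ C A + C B * X := by
    rw [← hg]
    exact dvd_sub hdvd (dvd_mul_left f (C (v₁ * v₂)))
  have hzero : C A + C B * X = 0 := by
    by_contra hne
    have := Polynomial.degree_le_of_dvd hdvd2 hne
    rw [hdegf] at this
    have hle : (C A + C B * X).degree ≤ 1 := by
      refine le_trans (degree_add_le _ _) (max_le ?_ ?_)
      · exact le_trans degree_C_le (by decide)
      · exact le_trans (degree_mul_le _ _) (by
          rw [degree_X]
          calc (C B).degree + 1 ≤ 0 + 1 := add_le_add_left degree_C_le 1
          _ ≤ 1 := by decide)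
    have : (2 : WithBot ℕ) ≤ 1 := le_trans this hle
    exact absurd this (by decide)
  have hA0 : A = 0 := by
    have := congrArg (fun p => Polynomial.coeff p 0) hzero
    simpa using this
  have hB0 : B = 0 := by
    have := congrArg (fun p => Polynomial.coeff p 1) hzero
    simpa using this
  constructor
  · have := sub_eq_zero.mp hA0; exact this.symm ▸ rfl
  · have := sub_eq_zero.mp hB0; exact this.symm ▸ rfl

end Main

end HalfDegAux

/-- char F = 2, deg c odd and deg c > 2 deg b: Deg is additive on products in
R = F[x][t]/(t² + bt + c): Deg(αβ) = Deg α + Deg β. -/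
theorem halfDeg_mul
    (F : Type) [Field F] [CharP F 2] (b c : Polynomial F)
    (hodd : Odd c.natDegree) (hdeg : 2 * b.natDegree < c.natDegree) :
    ∀ (f : Polynomial (Polynomial F)), f = X ^ 2 + C b * X + C c →
    ∀ u₁ v₁ u₂ v₂ U V : Polynomial F,
      (AdjoinRoot.of f u₁ + AdjoinRoot.root f * AdjoinRoot.of f v₁)
          * (AdjoinRoot.of f u₂ + AdjoinRoot.root f * AdjoinRoot.of f v₂)
        = AdjoinRoot.of f U + AdjoinRoot.root f * AdjoinRoot.of f V →
      halfDeg c U V = halfDeg c u₁ v₁ + halfDeg c u₂ v₂ := by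
  intro f hf u₁ v₁ u₂ v₂ U V hmul
  obtain ⟨hU, hV⟩ := HalfDegAux.repr_unique b c f hf u₁ v₁ u₂ v₂ U V hmul
  rw [hU, hV]
  exact HalfDegAux.core hodd hdeg u₁ v₁ u₂ v₂
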